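/- Fix 0 < s < 1, k ∈ ℤ, ξ ∈ ℝ, and define A_{n,k}(ξ) = (1/2π) ∫₀^{2π} e^{ikθ} Tₙ(s cos(θ + ξ/n)) Tₙ(s cos θ) dθ. Then lim_{n→∞} A_{n,k}(ξ) = ((1 + (−1)ᵏ)/(4π)) ∫_{−s}^{s} e_k(x) cos(ξ √(s² − x²)/√(1 − x²)) dx/√(s² − x²), where e_k(x) = exp(i k arccos(x/s)). -/

import Mathlib

open Real Filter MeasureTheory Set intervalIntegral Complex Topology
set_option linter.unusedSectionVars false
set_option maxHeartbeats 1000000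
set_option linter.unusedVariables false
set_option linter.unnecessarySimpa false

-- norm of exp(I k θ)
lemma norm_exp_Ik (k : ℤ) (θ : ℝ) : ‖Complex.exp (Complex.I * k * θ)‖ = 1 := by
  rw [show Complex.I * k * θ = ((k * θ : ℝ) : ℂ) * Complex.I by push_cast; ring]
  rw [Complex.norm_exp_ofReal_mul_I]

lemma abs_cos_sub_cos_le (a b : ℝ) : |Real.cos a - Real.cos b| ≤ |a - b| := by
  rw [Real.cos_sub_cos]
  have h1 : |Real.sin ((a + b) / 2)| ≤ 1 := Real.abs_sin_le_one _
  have h2 : |Real.sin ((a - b) / 2)| ≤ |(a - b) / 2| := Real.abs_sin_le_abs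
  calc |(-2) * Real.sin ((a+b)/2) * Real.sin ((a-b)/2)|
      = 2 * (|Real.sin ((a+b)/2)| * |Real.sin ((a-b)/2)|) := by
        rw [abs_mul, abs_mul]; simp [mul_assoc]
    _ ≤ 2 * (1 * |(a - b) / 2|) := by
        gcongr
    _ = |a - b| := by rw [abs_div]; simp; ring

lemma ofReal_cos_eq (y : ℝ) :
    ((Real.cos y : ℝ) : ℂ) = (Complex.exp (Complex.I * y) + Complex.exp (-(Complex.I * y))) / 2 := by
  rw [Complex.ofReal_cos, Complex.cos]
  ring_nf

lemma exp_neg_pi_k (k : ℤ) : Complex.exp (-(Complex.I * k * Real.pi)) = ((-1 : ℝ) ^ k : ℝ) := by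
  rw [show -(Complex.I * k * (Real.pi:ℂ)) = (k : ℂ) * (-((Real.pi:ℂ) * Complex.I)) by ring]
  rw [Complex.exp_int_mul]
  have h1 : Complex.exp (-((Real.pi:ℂ) * Complex.I)) = -1 := by
    rw [Complex.exp_neg, Complex.exp_pi_mul_I]; norm_num
  rw [h1]; push_cast; ring

-- slope lemma
lemma tendsto_nDelta {s : ℝ} (hs0 : 0 < s) (hs1 : s < 1) (ξ θ : ℝ)
    (phi : ℝ → ℝ) (h' : ℝ) (hphi : HasDerivAt phi h' θ) :
    Tendsto (fun n : ℕ => (n : ℝ) * (phi (θ + ξ / n) - phi θ)) atTop (𝓝 (ξ * h')) := by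
  rcases eq_or_ne ξ 0 with rfl | hξ
  · simpa using tendsto_const_nhds
  · have hslope := hasDerivAt_iff_tendsto_slope.1 hphi
    have hy : Tendsto (fun n : ℕ => θ + ξ / n) atTop (𝓝[≠] θ) := by
      rw [tendsto_nhdsWithin_iff]
      constructor
      · have : Tendsto (fun n : ℕ => ξ / n) atTop (𝓝 0) :=
          Tendsto.div_atTop tendsto_const_nhds tendsto_natCast_atTop_atTop
        simpa using tendsto_const_nhds.add this
      · filter_upwards [eventually_ge_atTop 1] with n hn
        simp only [mem_compl_iff, mem_singleton_iff]
        have : ξ / (n:ℝ) ≠ 0 := div_ne_zero hξ (by positivity)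
        intro h; apply this; linarith [h]
    have hcomp : Tendsto (fun n : ℕ => slope phi θ (θ + ξ / n)) atTop (𝓝 h') :=
      hslope.comp hy
    have := hcomp.const_mul ξ
    apply this.congr'
    filter_upwards [eventually_ge_atTop 1] with n hn
    have hn0 : (n:ℝ) ≠ 0 := by positivity
    have h5 : θ + ξ/(n:ℝ) - θ = ξ/n := by ring
    rw [slope_def_field, h5, div_div_eq_mul_div]
    field_simp


/-- `e_k(x) = exp(i k arccos(x/s))`. -/
noncomputable def ek (s : ℝ) (k : ℤ) (x : ℝ) : ℂ :=
  Complex.exp (Complex.I * k * Real.arccos (x / s))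

/-- `A_{n,k}(ξ) = (1/2π) ∫₀^{2π} e^{ikθ} Tₙ(s cos(θ + ξ/n)) Tₙ(s cos θ) dθ`. -/
noncomputable def Ank (s : ℝ) (k : ℤ) (ξ : ℝ) (n : ℕ) : ℂ :=
  ((1 / (2 * Real.pi) : ℝ) : ℂ) * ∫ θ in (0:ℝ)..(2 * Real.pi),
    Complex.exp (Complex.I * k * θ) *
      Complex.ofReal ((Polynomial.Chebyshev.T ℝ (n : ℤ)).eval (s * Real.cos (θ + ξ / n))) *
      Complex.ofReal ((Polynomial.Chebyshev.T ℝ (n : ℤ)).eval (s * Real.cos θ))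

noncomputable def phi (s θ : ℝ) : ℝ := Real.arccos (s * Real.cos θ)
noncomputable def hh (s θ : ℝ) : ℝ := s * Real.sin θ / Real.sqrt (1 - (s * Real.cos θ) ^ 2)

section
variable {s : ℝ} (hs0 : 0 < s) (hs1 : s < 1)
include hs0 hs1

lemma sc_mem (θ : ℝ) : -1 < s * Real.cos θ ∧ s * Real.cos θ < 1 := by
  constructor <;> nlinarith [Real.neg_one_le_cos θ, Real.cos_le_one θ, hs0, hs1]

lemma arccos_s_lt : Real.arccos s < Real.pi / 2 := Real.arccos_lt_pi_div_two.2 hs0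

lemma arccos_s_pos : 0 < Real.arccos s := Real.arccos_pos.2 hs1

lemma phi_mem {θ : ℝ} (hθ : θ ∈ Ioo 0 Real.pi) :
    phi s θ ∈ Ioo (Real.arccos s) (Real.pi - Real.arccos s) := by
  have hc1 : Real.cos θ < Real.cos 0 := by
    apply Real.strictAntiOn_cos ⟨le_refl 0, Real.pi_pos.le⟩ ⟨hθ.1.le, hθ.2.le⟩ hθ.1
  have hc2 : Real.cos Real.pi < Real.cos θ := by
    apply Real.strictAntiOn_cos ⟨hθ.1.le, hθ.2.le⟩ ⟨Real.pi_pos.le, le_refl _⟩ hθ.2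
  rw [Real.cos_zero] at hc1; rw [Real.cos_pi] at hc2
  have h1 : s * Real.cos θ < s := by nlinarith
  have h2 : -s < s * Real.cos θ := by nlinarith
  constructor
  · rw [phi]
    apply Real.strictAntiOn_arccos ⟨by nlinarith, by nlinarith⟩ ⟨by linarith, hs1.le⟩ h1
  · rw [phi, ← Real.arccos_neg]
    apply Real.strictAntiOn_arccos ⟨by linarith, by nlinarith⟩ ⟨by nlinarith, by nlinarith⟩ h2

lemma phi_strictMono : StrictMonoOn (phi s) (Icc 0 Real.pi) := by
  intro x hx y hy hxy
  have hc : Real.cos y < Real.cos x := Real.strictAntiOn_cos hx hy hxy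
  have h1 : s * Real.cos y < s * Real.cos x := by nlinarith
  exact Real.strictAntiOn_arccos
    ⟨by linarith [(sc_mem hs0 hs1 y).1], by linarith [(sc_mem hs0 hs1 y).2]⟩
    ⟨by linarith [(sc_mem hs0 hs1 x).1], by linarith [(sc_mem hs0 hs1 x).2]⟩ h1

lemma cosu_mem {u : ℝ} (hu : u ∈ Ioo (Real.arccos s) (Real.pi - Real.arccos s)) :
    -s < Real.cos u ∧ Real.cos u < s := by
  have ha0 := arccos_s_pos hs0 hs1
  have ha2 := arccos_s_lt hs0 hs1
  have hs1' : s ≤ 1 := hs1.le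
  have hsm1 : (-1:ℝ) ≤ s := by linarith
  have hu0 : 0 < u := lt_trans ha0 hu.1
  have hupi : u < Real.pi := by linarith [hu.2]
  constructor
  · have : Real.cos u > Real.cos (Real.pi - Real.arccos s) := by
      apply Real.strictAntiOn_cos ⟨hu0.le, hupi.le⟩ ⟨by linarith, by linarith⟩ hu.2
    rw [Real.cos_pi_sub, Real.cos_arccos hsm1 hs1'] at this
    linarith
  · have : Real.cos u < Real.cos (Real.arccos s) := by
      apply Real.strictAntiOn_cos ⟨Real.arccos_nonneg s, by linarith⟩ ⟨hu0.le, hupi.le⟩ hu.1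
    rwa [Real.cos_arccos hsm1 hs1'] at this

lemma phi_img : phi s '' Ioo 0 Real.pi = Ioo (Real.arccos s) (Real.pi - Real.arccos s) := by
  apply Subset.antisymm
  · rintro - ⟨θ, hθ, rfl⟩; exact phi_mem hs0 hs1 hθ
  · rintro u hu
    obtain ⟨hc1, hc2⟩ := cosu_mem hs0 hs1 hu
    have hs' : s ≠ 0 := hs0.ne'
    have hd1 : (-1:ℝ) < Real.cos u / s := by rw [lt_div_iff₀ hs0] at *; nlinarith
    have hd2 : Real.cos u / s < 1 := by rw [div_lt_one hs0]; exact hc2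
    refine ⟨Real.arccos (Real.cos u / s), ⟨Real.arccos_pos.2 hd2, lt_of_le_of_ne (Real.arccos_le_pi _) (by simp [Real.arccos_eq_pi]; linarith)⟩, ?_⟩
    rw [phi, Real.cos_arccos (by linarith) hd2.le, mul_div_cancel₀ _ hs']
    have ha0 := arccos_s_pos hs0 hs1
    exact Real.arccos_cos (by linarith [hu.1]) (by linarith [hu.2])

lemma cos_phi (θ : ℝ) : Real.cos (phi s θ) = s * Real.cos θ :=
  Real.cos_arccos (by linarith [(sc_mem hs0 hs1 θ).1]) (by linarith [(sc_mem hs0 hs1 θ).2])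

lemma cheb_eval (n : ℕ) (θ : ℝ) :
    (Polynomial.Chebyshev.T ℝ (n : ℤ)).eval (s * Real.cos θ) = Real.cos (n * phi s θ) := by
  rw [← cos_phi hs0 hs1 θ, Polynomial.Chebyshev.T_real_cos]
  push_cast; ring_nf

lemma denom_pos (θ : ℝ) : 0 < 1 - (s * Real.cos θ) ^ 2 := by
  nlinarith [(sc_mem hs0 hs1 θ).1, (sc_mem hs0 hs1 θ).2]

lemma hasDerivAt_phi (θ : ℝ) : HasDerivAt (phi s) (hh s θ) θ := by
  have h1 : HasDerivAt (fun θ => s * Real.cos θ) (s * (-Real.sin θ)) θ :=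
    (Real.hasDerivAt_cos θ).const_mul s
  have h2 : HasDerivAt Real.arccos (-(1 / Real.sqrt (1 - (s * Real.cos θ) ^ 2))) (s * Real.cos θ) :=
    Real.hasDerivAt_arccos (by linarith [(sc_mem hs0 hs1 θ).1]) (by linarith [(sc_mem hs0 hs1 θ).2])
  have h3 := h2.comp θ h1
  have h4 : hh s θ = -(1 / Real.sqrt (1 - (s * Real.cos θ) ^ 2)) * (s * (-Real.sin θ)) := by
    rw [hh]; field_simp
  rw [h4]
  exact h3

omit hs0 hs1 in
lemma continuous_phi : Continuous (phi s) :=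
  Real.continuous_arccos.comp (continuous_const.mul Real.continuous_cos)

lemma continuous_hh : Continuous (hh s) := by
  apply Continuous.div ((continuous_const.mul Real.continuous_sin))
    (Real.continuous_sqrt.comp (by continuity))
  intro θ
  exact (Real.sqrt_pos.2 (denom_pos hs0 hs1 θ)).ne'


lemma F0_int : IntegrableOn (fun u => Real.sin u / Real.sqrt (s^2 - Real.cos u^2))
    (Ioo (Real.arccos s) (Real.pi - Real.arccos s)) := by
  have h := integrableOn_deriv_of_nonneg
    (g := fun u => - Real.arcsin (Real.cos u / s))
    (g' := fun u => Real.sin u / Real.sqrt (s^2 - Real.cos u^2))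
    (a := Real.arccos s) (b := Real.pi - Real.arccos s)
    ((Real.continuous_arcsin.comp (Real.continuous_cos.div_const s)).neg.continuousOn)
    ?_ ?_
  · exact h.mono_set Ioo_subset_Ioc_self
  · intro x hx
    obtain ⟨hc1, hc2⟩ := cosu_mem hs0 hs1 hx
    have hd1 : (-1:ℝ) < Real.cos x / s := by rw [lt_div_iff₀ hs0]; nlinarith
    have hd2 : Real.cos x / s < 1 := by rw [div_lt_one hs0]; exact hc2
    have hpos : (0:ℝ) < 1 - (Real.cos x / s)^2 := by nlinarith
    have harc : HasDerivAt Real.arcsin (1 / Real.sqrt (1 - (Real.cos x / s)^2)) (Real.cos x / s) :=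
      Real.hasDerivAt_arcsin hd1.ne' hd2.ne
    have hin : HasDerivAt (fun u => Real.cos u / s) (-Real.sin x / s) x :=
      (Real.hasDerivAt_cos x).div_const s
    have hcomp := (harc.comp x hin).neg
    have hsq : Real.sqrt (s^2 - Real.cos x^2) = s * Real.sqrt (1 - (Real.cos x / s)^2) := by
      rw [show s^2 - Real.cos x^2 = s^2 * (1 - (Real.cos x / s)^2) by field_simp]
      rw [Real.sqrt_mul (sq_nonneg s), Real.sqrt_sq hs0.le]
    have hne : Real.sqrt (1 - (Real.cos x / s)^2) ≠ 0 := (Real.sqrt_pos.2 hpos).ne'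
    have e1 : -(1 / Real.sqrt (1 - (Real.cos x / s)^2) * (-Real.sin x / s))
        = Real.sin x / (s * Real.sqrt (1 - (Real.cos x / s)^2)) := by
      field_simp
    have : Real.sin x / Real.sqrt (s^2 - Real.cos x^2)
        = -(1 / Real.sqrt (1 - (Real.cos x / s)^2) * (-Real.sin x / s)) := by
      rw [hsq, e1]
    show HasDerivAt (fun u => -Real.arcsin (Real.cos u / s))
      (Real.sin x / Real.sqrt (s ^ 2 - Real.cos x ^ 2)) x
    rw [this]
    exact hcomp
  · intro x hx
    have ha0 := arccos_s_pos hs0 hs1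
    have hsin : 0 ≤ Real.sin x :=
      Real.sin_nonneg_of_nonneg_of_le_pi (by linarith [hx.1]) (by linarith [hx.2])
    positivity

lemma CoV (g : ℝ → ℂ) (m : ℝ) :
    ∫ θ in Ioo 0 Real.pi, g θ * Complex.exp (Complex.I * m * phi s θ) =
    ∫ u in Ioo (Real.arccos s) (Real.pi - Real.arccos s),
      (g (Real.arccos (Real.cos u / s)) *
        ((Real.sin u / Real.sqrt (s^2 - Real.cos u^2) : ℝ) : ℂ)) *
        Complex.exp (Complex.I * m * u) := by
  rw [← phi_img hs0 hs1,
    integral_image_eq_integral_abs_deriv_smul measurableSet_Ioo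
      (fun x hx => (hasDerivAt_phi hs0 hs1 x).hasDerivWithinAt)
      (((phi_strictMono hs0 hs1).injOn).mono Ioo_subset_Icc_self)]
  apply (setIntegral_congr_fun measurableSet_Ioo ?_).symm
  intro θ hθ
  dsimp only
  have hsin : 0 < Real.sin θ := Real.sin_pos_of_pos_of_lt_pi hθ.1 hθ.2
  have hD : 0 < 1 - (s * Real.cos θ)^2 := denom_pos hs0 hs1 θ
  have hDne : Real.sqrt (1 - (s * Real.cos θ)^2) ≠ 0 := (Real.sqrt_pos.2 hD).ne'
  have hcosphi : Real.cos (phi s θ) = s * Real.cos θ := cos_phi hs0 hs1 θ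
  have harc : Real.arccos (Real.cos (phi s θ) / s) = θ := by
    rw [hcosphi, mul_div_cancel_left₀ _ hs0.ne', Real.arccos_cos hθ.1.le hθ.2.le]
  have hsq : s^2 - Real.cos (phi s θ)^2 = (s * Real.sin θ)^2 := by
    rw [hcosphi]
    linear_combination (-(s^2)) * (Real.sin_sq_add_cos_sq θ)
  have hsqrt : Real.sqrt (s^2 - Real.cos (phi s θ)^2) = s * Real.sin θ := by
    rw [hsq, Real.sqrt_sq (by positivity)]
  have hsinphi : Real.sin (phi s θ) = Real.sqrt (1 - (s * Real.cos θ)^2) := by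
    rw [phi, Real.sin_arccos]
  have hhpos : 0 < hh s θ := by
    rw [hh]; positivity
  have h6 : |hh s θ| * (Real.sin (phi s θ) / Real.sqrt (s^2 - Real.cos (phi s θ)^2)) = 1 := by
    rw [abs_of_pos hhpos, hsinphi, hsqrt, hh]
    field_simp
    exact div_self (by rw [← mul_pow]; exact hDne)
  have h7 : ((|hh s θ| : ℝ) : ℂ) *
      ((Real.sin (phi s θ) / Real.sqrt (s^2 - Real.cos (phi s θ)^2) : ℝ) : ℂ) = 1 := by
    rw [← Complex.ofReal_mul, h6, Complex.ofReal_one]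
  rw [harc, Complex.real_smul]
  calc ((|hh s θ| : ℝ):ℂ) * (g θ *
        ((Real.sin (phi s θ) / Real.sqrt (s^2 - Real.cos (phi s θ)^2) : ℝ) : ℂ) *
        Complex.exp (Complex.I * m * phi s θ))
      = (((|hh s θ| : ℝ):ℂ) *
        ((Real.sin (phi s θ) / Real.sqrt (s^2 - Real.cos (phi s θ)^2) : ℝ) : ℂ)) *
        (g θ * Complex.exp (Complex.I * m * phi s θ)) := by ring
    _ = g θ * Complex.exp (Complex.I * m * phi s θ) := by rw [h7, one_mul]

end

lemma RL_int (F : ℝ → ℂ) (hF : Integrable F) (m : ℕ → ℝ)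
    (hm : Tendsto (fun n => -(m n)/(2*Real.pi)) atTop (cocompact ℝ)) :
    Tendsto (fun n => ∫ u, F u * Complex.exp (Complex.I * (m n) * u)) atTop (𝓝 0) := by
  have h := (Real.tendsto_integral_exp_smul_cocompact F).comp hm
  apply h.congr
  intro n
  refine integral_congr_ae (Eventually.of_forall fun v => ?_)
  dsimp only
  rw [Circle.smul_def, Real.fourierChar_apply]
  rw [show (2 * Real.pi * -(v * (-(m n)/(2*Real.pi))) : ℝ) = v * m n by
        field_simp]
  rw [show ((v * m n : ℝ) : ℂ) * Complex.I = Complex.I * (m n) * v by push_cast; ring]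
  rw [smul_eq_mul]; ring

section
variable {s : ℝ} (hs0 : 0 < s) (hs1 : s < 1)
include hs0 hs1

lemma RL0 (g : ℝ → ℂ) (hg : Continuous g) (C : ℝ) (hgC : ∀ θ, ‖g θ‖ ≤ C) (m : ℕ → ℝ)
    (hm : Tendsto (fun n => -(m n)/(2*Real.pi)) atTop (cocompact ℝ)) :
    Tendsto (fun n => ∫ θ in Ioo 0 Real.pi, g θ * Complex.exp (Complex.I * (m n) * phi s θ))
      atTop (𝓝 0) := by
  have ha0 := arccos_s_pos hs0 hs1
  have ha2 := arccos_s_lt hs0 hs1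
  set a := Real.arccos s with hadef
  set b := Real.pi - Real.arccos s with hbdef
  set F : ℝ → ℂ := fun u => g (Real.arccos (Real.cos u / s)) *
      ((Real.sin u / Real.sqrt (s^2 - Real.cos u^2) : ℝ) : ℂ) with hFdef
  have hC0 : 0 ≤ C := le_trans (norm_nonneg _) (hgC 0)
  have hne : ∀ u ∈ Ioo a b, Real.sqrt (s^2 - Real.cos u^2) ≠ 0 := by
    intro u hu
    obtain ⟨h1, h2⟩ := cosu_mem hs0 hs1 hu
    have : 0 < s^2 - Real.cos u^2 := by nlinarith
    exact (Real.sqrt_pos.2 this).ne'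
  have hFcont : ContinuousOn F (Ioo a b) := by
    apply ContinuousOn.mul
    · exact (hg.comp (Real.continuous_arccos.comp
        (Real.continuous_cos.div_const s))).continuousOn
    · apply Complex.continuous_ofReal.comp_continuousOn
      exact ContinuousOn.div Real.continuous_sin.continuousOn
        (Real.continuous_sqrt.comp (continuous_const.sub (Real.continuous_cos.pow 2))).continuousOn
        hne
  have hFint : IntegrableOn F (Ioo a b) := by
    apply Integrable.mono' ((F0_int hs0 hs1).const_mul C)
      (hFcont.aestronglyMeasurable measurableSet_Ioo)
    rw [ae_restrict_iff' measurableSet_Ioo]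
    refine Eventually.of_forall fun u hu => ?_
    have hsin : 0 ≤ Real.sin u :=
      Real.sin_nonneg_of_nonneg_of_le_pi (by linarith [hu.1]) (by linarith [hu.2])
    have h0 : 0 ≤ Real.sin u / Real.sqrt (s^2 - Real.cos u^2) := by positivity
    rw [hFdef]
    rw [norm_mul, Complex.norm_real, Real.norm_of_nonneg h0]
    exact mul_le_mul_of_nonneg_right (hgC _) h0
  set Fe := (Ioo a b).indicator F with hFe
  have hFeInt : Integrable Fe := (integrable_indicator_iff measurableSet_Ioo).2 hFint
  have key := RL_int Fe hFeInt m hm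
  apply key.congr
  intro n
  rw [show (∫ u, Fe u * Complex.exp (Complex.I * (m n) * u))
      = ∫ u, (Ioo a b).indicator (fun u => F u * Complex.exp (Complex.I * (m n) * u)) u from
      integral_congr_ae (Eventually.of_forall fun u => by
        rw [Set.indicator_mul_left])]
  rw [MeasureTheory.integral_indicator measurableSet_Ioo]
  exact (CoV hs0 hs1 g (m n)).symm

end

section
variable {s : ℝ} (hs0 : 0 < s) (hs1 : s < 1)
include hs0 hs1

lemma cont_exp_Ik (k : ℤ) : Continuous (fun θ : ℝ => Complex.exp (Complex.I*k*θ)) :=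
  Complex.continuous_exp.comp (continuous_const.mul Complex.continuous_ofReal)

lemma hP (k : ℤ) (ξ : ℝ) : Tendsto (fun n : ℕ => ∫ θ in (0:ℝ)..(2*Real.pi),
    Complex.exp (Complex.I*k*θ) *
      ((Real.cos ((n:ℝ) * phi s (θ + ξ/n) - (n:ℝ) * phi s θ) : ℝ) : ℂ)) atTop
    (𝓝 (∫ θ in (0:ℝ)..(2*Real.pi),
      Complex.exp (Complex.I*k*θ) * ((Real.cos (ξ * hh s θ) : ℝ):ℂ))) := by
  have hφ : Continuous (phi s) := continuous_phi
  apply intervalIntegral.tendsto_integral_filter_of_dominated_convergence (fun _ => (1:ℝ))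
  · refine Eventually.of_forall fun n => Continuous.aestronglyMeasurable ?_
    exact (cont_exp_Ik hs0 hs1 k).mul (Complex.continuous_ofReal.comp (Real.continuous_cos.comp
      ((continuous_const.mul (hφ.comp (continuous_id.add continuous_const))).sub
        (continuous_const.mul hφ))))
  · refine Eventually.of_forall fun n => Eventually.of_forall fun θ _ => ?_
    rw [norm_mul, norm_exp_Ik, one_mul, Complex.norm_real, Real.norm_eq_abs]
    exact Real.abs_cos_le_one _
  · exact intervalIntegrable_const
  · refine Eventually.of_forall fun θ _ => ?_
    have h1 := tendsto_nDelta hs0 hs1 ξ θ (phi s) (hh s θ) (hasDerivAt_phi hs0 hs1 θ)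
    have h3 : Tendsto (fun n : ℕ => ((Real.cos ((n:ℝ) * (phi s (θ+ξ/n) - phi s θ)) : ℝ) : ℂ))
        atTop (𝓝 ((Real.cos (ξ * hh s θ) : ℝ) : ℂ)) :=
      (Complex.continuous_ofReal.tendsto _).comp ((Real.continuous_cos.tendsto _).comp h1)
    have h4 := h3.const_mul (Complex.exp (Complex.I*k*θ))
    apply h4.congr
    intro n
    rw [mul_sub]

lemma Ank_eq (k : ℤ) (ξ : ℝ) (n : ℕ) : Ank s k ξ n = ((1 / (2 * Real.pi) : ℝ) : ℂ) *
    (((∫ θ in (0:ℝ)..(2*Real.pi), Complex.exp (Complex.I*k*θ) *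
        ((Real.cos ((n:ℝ) * phi s (θ + ξ/n) - (n:ℝ) * phi s θ) : ℝ) : ℂ)) +
      (∫ θ in (0:ℝ)..(2*Real.pi), Complex.exp (Complex.I*k*θ) *
        ((Real.cos ((n:ℝ) * phi s (θ + ξ/n) + (n:ℝ) * phi s θ) : ℝ) : ℂ))) / 2) := by
  have hφ : Continuous (phi s) := continuous_phi
  rw [Ank]
  congr 1
  have hpoint : ∀ θ : ℝ, Complex.exp (Complex.I * k * θ) *
      Complex.ofReal ((Polynomial.Chebyshev.T ℝ (n : ℤ)).eval (s * Real.cos (θ + ξ / n))) *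
      Complex.ofReal ((Polynomial.Chebyshev.T ℝ (n : ℤ)).eval (s * Real.cos θ)) =
      (Complex.exp (Complex.I*k*θ) *
        ((Real.cos ((n:ℝ) * phi s (θ + ξ/n) - (n:ℝ) * phi s θ) : ℝ) : ℂ) +
       Complex.exp (Complex.I*k*θ) *
        ((Real.cos ((n:ℝ) * phi s (θ + ξ/n) + (n:ℝ) * phi s θ) : ℝ) : ℂ)) / 2 := by
    intro θ
    rw [cheb_eval hs0 hs1 n (θ + ξ/n), cheb_eval hs0 hs1 n θ]
    have htrig : Real.cos ((n:ℝ) * phi s (θ + ξ/n)) * Real.cos ((n:ℝ) * phi s θ)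
        = (Real.cos ((n:ℝ) * phi s (θ + ξ/n) - (n:ℝ) * phi s θ)
          + Real.cos ((n:ℝ) * phi s (θ + ξ/n) + (n:ℝ) * phi s θ)) / 2 := by
      rw [Real.cos_sub, Real.cos_add]; ring
    calc Complex.exp (Complex.I*k*θ) * ((Real.cos ((n:ℝ) * phi s (θ + ξ/n)) : ℝ) : ℂ) *
          ((Real.cos ((n:ℝ) * phi s θ) : ℝ) : ℂ)
        = Complex.exp (Complex.I*k*θ) *
          ((Real.cos ((n:ℝ) * phi s (θ + ξ/n)) * Real.cos ((n:ℝ) * phi s θ) : ℝ) : ℂ) := by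
          push_cast; ring
      _ = _ := by rw [htrig]; push_cast; ring
  rw [intervalIntegral.integral_congr (g := fun θ =>
      (Complex.exp (Complex.I*k*θ) *
        ((Real.cos ((n:ℝ) * phi s (θ + ξ/n) - (n:ℝ) * phi s θ) : ℝ) : ℂ) +
       Complex.exp (Complex.I*k*θ) *
        ((Real.cos ((n:ℝ) * phi s (θ + ξ/n) + (n:ℝ) * phi s θ) : ℝ) : ℂ)) / 2)
      (fun θ _ => hpoint θ)]
  rw [intervalIntegral.integral_div]
  congr 1
  apply intervalIntegral.integral_add
  · apply Continuous.intervalIntegrable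
    exact (cont_exp_Ik hs0 hs1 k).mul (Complex.continuous_ofReal.comp (Real.continuous_cos.comp
      ((continuous_const.mul (hφ.comp (continuous_id.add continuous_const))).sub
        (continuous_const.mul hφ))))
  · apply Continuous.intervalIntegrable
    exact (cont_exp_Ik hs0 hs1 k).mul (Complex.continuous_ofReal.comp (Real.continuous_cos.comp
      ((continuous_const.mul (hφ.comp (continuous_id.add continuous_const))).add
        (continuous_const.mul hφ))))

end

lemma norm_exp_I_ofReal (y : ℝ) : ‖Complex.exp (Complex.I * (y:ℂ))‖ = 1 := by
  rw [show Complex.I * (y:ℂ) = (y:ℂ) * Complex.I by ring,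
    Complex.norm_exp_ofReal_mul_I]

lemma norm_exp_neg_I_ofReal (y : ℝ) : ‖Complex.exp (-(Complex.I * (y:ℂ)))‖ = 1 := by
  rw [show -(Complex.I * (y:ℂ)) = ((-y : ℝ):ℂ) * Complex.I by push_cast; ring,
    Complex.norm_exp_ofReal_mul_I]

lemma norm_exp_neg_Ik (k : ℤ) (τ : ℝ) : ‖Complex.exp (-(Complex.I * k * τ))‖ = 1 := by
  rw [show -(Complex.I * (k:ℂ) * (τ:ℝ)) = Complex.I * ((-k : ℤ):ℂ) * (τ:ℝ) by push_cast; ring]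
  exact norm_exp_Ik (-k) τ

lemma exp_reflect (k : ℤ) (τ : ℝ) :
    Complex.exp (Complex.I * k * ((2*Real.pi - τ : ℝ):ℂ)) = Complex.exp (-(Complex.I * k * τ)) := by
  rw [show Complex.I * k * ((2*Real.pi - τ : ℝ):ℂ)
      = (k:ℂ) * (2*Real.pi*Complex.I) + -(Complex.I * k * τ) by push_cast; ring]
  rw [Complex.exp_add, Complex.exp_int_mul_two_pi_mul_I, one_mul]

lemma reflect_int (f : ℝ → ℂ) :
    ∫ θ in (Real.pi)..(2*Real.pi), f θ = ∫ θ in (0:ℝ)..Real.pi, f (2*Real.pi - θ) := by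
  have h := intervalIntegral.integral_comp_sub_left (a := 0) (b := Real.pi) f (2*Real.pi)
  rw [show 2*Real.pi - Real.pi = Real.pi by ring, sub_zero] at h
  exact h.symm

noncomputable def gp (s : ℝ) (k : ℤ) (ξ : ℝ) (τ : ℝ) : ℂ :=
  (Complex.exp (Complex.I*k*τ) * Complex.exp (Complex.I * ((ξ * hh s τ : ℝ):ℂ))
    + Complex.exp (-(Complex.I*k*τ)) * Complex.exp (-(Complex.I * ((ξ * hh s τ : ℝ):ℂ))))/2

noncomputable def gm (s : ℝ) (k : ℤ) (ξ : ℝ) (τ : ℝ) : ℂ :=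
  (Complex.exp (Complex.I*k*τ) * Complex.exp (-(Complex.I * ((ξ * hh s τ : ℝ):ℂ)))
    + Complex.exp (-(Complex.I*k*τ)) * Complex.exp (Complex.I * ((ξ * hh s τ : ℝ):ℂ)))/2

lemma gp_norm (s : ℝ) (k : ℤ) (ξ : ℝ) (τ : ℝ) : ‖gp s k ξ τ‖ ≤ 1 := by
  rw [gp, norm_div]
  have h := norm_add_le
    (Complex.exp (Complex.I*k*τ) * Complex.exp (Complex.I * ((ξ * hh s τ : ℝ):ℂ)))
    (Complex.exp (-(Complex.I*k*τ)) * Complex.exp (-(Complex.I * ((ξ * hh s τ : ℝ):ℂ))))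
  rw [norm_mul, norm_mul, norm_exp_Ik, norm_exp_neg_Ik, norm_exp_I_ofReal,
    norm_exp_neg_I_ofReal] at h
  have h2 : ‖(2:ℂ)‖ = 2 := by norm_num
  rw [h2]
  rw [div_le_one (by norm_num)]
  linarith

lemma gm_norm (s : ℝ) (k : ℤ) (ξ : ℝ) (τ : ℝ) : ‖gm s k ξ τ‖ ≤ 1 := by
  rw [gm, norm_div]
  have h := norm_add_le
    (Complex.exp (Complex.I*k*τ) * Complex.exp (-(Complex.I * ((ξ * hh s τ : ℝ):ℂ))))
    (Complex.exp (-(Complex.I*k*τ)) * Complex.exp (Complex.I * ((ξ * hh s τ : ℝ):ℂ)))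
  rw [norm_mul, norm_mul, norm_exp_Ik, norm_exp_neg_Ik, norm_exp_neg_I_ofReal,
    norm_exp_I_ofReal] at h
  have h2 : ‖(2:ℂ)‖ = 2 := by norm_num
  rw [h2]
  rw [div_le_one (by norm_num)]
  linarith

lemma phi_reflect (s τ : ℝ) : phi s (2*Real.pi - τ) = phi s τ := by
  rw [phi, phi, Real.cos_two_pi_sub]

lemma hh_reflect (s τ : ℝ) : hh s (2*Real.pi - τ) = - hh s τ := by
  rw [hh, hh, Real.sin_two_pi_sub, Real.cos_two_pi_sub]
  ring

lemma hh_pi_sub (s σ : ℝ) : hh s (Real.pi - σ) = hh s σ := by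
  rw [hh, hh, Real.sin_pi_sub, Real.cos_pi_sub,
    show (s * -Real.cos σ)^2 = (s * Real.cos σ)^2 by ring]

lemma hm_pos : Tendsto (fun n : ℕ => -((2*(n:ℝ)))/(2*Real.pi)) atTop (cocompact ℝ) := by
  have h1 : Tendsto (fun n:ℕ => (2*(n:ℝ))/(2*Real.pi)) atTop atTop :=
    (tendsto_natCast_atTop_atTop.const_mul_atTop two_pos).atTop_div_const (by positivity)
  have h2 : Tendsto (fun n:ℕ => -((2*(n:ℝ))/(2*Real.pi))) atTop atBot :=
    tendsto_neg_atTop_atBot.comp h1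
  rw [cocompact_eq_atBot_atTop]
  refine Tendsto.mono_right ?_ le_sup_left
  simpa [neg_div] using h2

lemma hm_neg : Tendsto (fun n : ℕ => -((-(2*(n:ℝ))))/(2*Real.pi)) atTop (cocompact ℝ) := by
  have h1 : Tendsto (fun n:ℕ => (2*(n:ℝ))/(2*Real.pi)) atTop atTop :=
    (tendsto_natCast_atTop_atTop.const_mul_atTop two_pos).atTop_div_const (by positivity)
  rw [cocompact_eq_atBot_atTop]
  refine Tendsto.mono_right ?_ le_sup_right
  simpa [neg_div] using h1

section
variable {s : ℝ} (hs0 : 0 < s) (hs1 : s < 1)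
include hs0 hs1

lemma gp_cont (k : ℤ) (ξ : ℝ) : Continuous (gp s k ξ) := by
  apply Continuous.div_const
  apply Continuous.add
  · exact (cont_exp_Ik hs0 hs1 k).mul (Complex.continuous_exp.comp (continuous_const.mul
      (Complex.continuous_ofReal.comp (continuous_const.mul (continuous_hh hs0 hs1)))))
  · exact (Complex.continuous_exp.comp ((continuous_const.mul Complex.continuous_ofReal).neg)).mul
      (Complex.continuous_exp.comp ((continuous_const.mul
        (Complex.continuous_ofReal.comp (continuous_const.mul (continuous_hh hs0 hs1)))).neg))

lemma gm_cont (k : ℤ) (ξ : ℝ) : Continuous (gm s k ξ) := by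
  apply Continuous.div_const
  apply Continuous.add
  · exact (cont_exp_Ik hs0 hs1 k).mul (Complex.continuous_exp.comp ((continuous_const.mul
      (Complex.continuous_ofReal.comp (continuous_const.mul (continuous_hh hs0 hs1)))).neg))
  · exact (Complex.continuous_exp.comp ((continuous_const.mul Complex.continuous_ofReal).neg)).mul
      (Complex.continuous_exp.comp (continuous_const.mul
        (Complex.continuous_ofReal.comp (continuous_const.mul (continuous_hh hs0 hs1)))))

lemma Gcont (k : ℤ) (ξ : ℝ) (n : ℕ) : Continuous (fun θ : ℝ => Complex.exp (Complex.I*k*θ) *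
    ((Real.cos (2*(n:ℝ) * phi s θ + ξ * hh s θ) : ℝ) : ℂ)) := by
  exact (cont_exp_Ik hs0 hs1 k).mul (Complex.continuous_ofReal.comp (Real.continuous_cos.comp
    ((continuous_const.mul (continuous_phi (s := s))).add
      (continuous_const.mul (continuous_hh hs0 hs1)))))

lemma hQ' (k : ℤ) (ξ : ℝ) : Tendsto (fun n : ℕ => ∫ θ in (0:ℝ)..(2*Real.pi),
    Complex.exp (Complex.I*k*θ) * ((Real.cos (2*(n:ℝ) * phi s θ + ξ * hh s θ) : ℝ) : ℂ))
    atTop (𝓝 0) := by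
  -- pointwise reflection identity
  have hpt : ∀ n : ℕ, ∀ τ : ℝ,
      Complex.exp (Complex.I*k*((2*Real.pi - τ : ℝ):ℂ)) *
        ((Real.cos (2*(n:ℝ) * phi s (2*Real.pi - τ) + ξ * hh s (2*Real.pi - τ)) : ℝ) : ℂ)
      + Complex.exp (Complex.I*k*τ) * ((Real.cos (2*(n:ℝ) * phi s τ + ξ * hh s τ) : ℝ) : ℂ)
      = gp s k ξ τ * Complex.exp (Complex.I * ((2*(n:ℝ) : ℝ):ℂ) * ((phi s τ : ℝ) : ℂ))
      + gm s k ξ τ * Complex.exp (Complex.I * ((-(2*(n:ℝ)) : ℝ):ℂ) * ((phi s τ : ℝ) : ℂ)) := by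
    intro n τ
    rw [phi_reflect, hh_reflect, exp_reflect,
      show 2*(n:ℝ) * phi s τ + ξ * (- hh s τ) = 2*(n:ℝ) * phi s τ - ξ * hh s τ by ring,
      ofReal_cos_eq, ofReal_cos_eq]
    rw [show Complex.I * ((2*(n:ℝ) * phi s τ + ξ * hh s τ : ℝ):ℂ)
        = Complex.I * ((2*(n:ℝ) : ℝ):ℂ) * ((phi s τ : ℝ):ℂ) + Complex.I * ((ξ * hh s τ : ℝ):ℂ) by
        push_cast; ring]
    rw [show -(Complex.I * ((2*(n:ℝ) : ℝ):ℂ) * ((phi s τ : ℝ):ℂ) + Complex.I * ((ξ * hh s τ : ℝ):ℂ))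
        = Complex.I * ((-(2*(n:ℝ)) : ℝ):ℂ) * ((phi s τ : ℝ):ℂ) + -(Complex.I * ((ξ * hh s τ : ℝ):ℂ)) by
        push_cast; ring]
    rw [show Complex.I * ((2*(n:ℝ) * phi s τ - ξ * hh s τ : ℝ):ℂ)
        = Complex.I * ((2*(n:ℝ) : ℝ):ℂ) * ((phi s τ : ℝ):ℂ) + -(Complex.I * ((ξ * hh s τ : ℝ):ℂ)) by
        push_cast; ring]
    rw [show -(Complex.I * ((2*(n:ℝ) : ℝ):ℂ) * ((phi s τ : ℝ):ℂ) + -(Complex.I * ((ξ * hh s τ : ℝ):ℂ)))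
        = Complex.I * ((-(2*(n:ℝ)) : ℝ):ℂ) * ((phi s τ : ℝ):ℂ) + Complex.I * ((ξ * hh s τ : ℝ):ℂ) by
        push_cast; ring]
    rw [Complex.exp_add, Complex.exp_add, Complex.exp_add, Complex.exp_add, gp, gm]
    ring
  -- split the integral
  have hsplit : ∀ n : ℕ, (∫ θ in (0:ℝ)..(2*Real.pi),
      Complex.exp (Complex.I*k*θ) * ((Real.cos (2*(n:ℝ) * phi s θ + ξ * hh s θ) : ℝ) : ℂ))
      = (∫ θ in Ioo (0:ℝ) Real.pi,
          gp s k ξ θ * Complex.exp (Complex.I * ((2*(n:ℝ) : ℝ):ℂ) * ((phi s θ : ℝ) : ℂ)))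
        + (∫ θ in Ioo (0:ℝ) Real.pi,
          gm s k ξ θ * Complex.exp (Complex.I * ((-(2*(n:ℝ)) : ℝ):ℂ) * ((phi s θ : ℝ) : ℂ))) := by
    intro n
    have hc1 : Continuous (fun θ : ℝ =>
        gp s k ξ θ * Complex.exp (Complex.I * ((2*(n:ℝ) : ℝ):ℂ) * ((phi s θ : ℝ) : ℂ))) :=
      (gp_cont hs0 hs1 k ξ).mul (Complex.continuous_exp.comp (continuous_const.mul
        (Complex.continuous_ofReal.comp (continuous_phi (s := s)))))
    have hc2 : Continuous (fun θ : ℝ =>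
        gm s k ξ θ * Complex.exp (Complex.I * ((-(2*(n:ℝ)) : ℝ):ℂ) * ((phi s θ : ℝ) : ℂ))) :=
      (gm_cont hs0 hs1 k ξ).mul (Complex.continuous_exp.comp (continuous_const.mul
        (Complex.continuous_ofReal.comp (continuous_phi (s := s)))))
    rw [← intervalIntegral.integral_add_adjacent_intervals (a := (0:ℝ)) (b := Real.pi)
        (c := 2*Real.pi) ((Gcont hs0 hs1 k ξ n).intervalIntegrable _ _)
        ((Gcont hs0 hs1 k ξ n).intervalIntegrable _ _)]
    rw [reflect_int]
    have hBcont : Continuous (fun θ : ℝ => Complex.exp (Complex.I*k*((2*Real.pi - θ:ℝ):ℂ)) *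
        ((Real.cos (2*(n:ℝ)*phi s (2*Real.pi-θ) + ξ*hh s (2*Real.pi-θ)):ℝ):ℂ)) := by
      exact (Gcont hs0 hs1 k ξ n).comp (continuous_const.sub continuous_id)
    rw [← intervalIntegral.integral_add ((Gcont hs0 hs1 k ξ n).intervalIntegrable _ _)
        (hBcont.intervalIntegrable _ _)]
    rw [intervalIntegral.integral_congr (g := fun τ =>
        gp s k ξ τ * Complex.exp (Complex.I * ((2*(n:ℝ) : ℝ):ℂ) * ((phi s τ : ℝ) : ℂ))
        + gm s k ξ τ * Complex.exp (Complex.I * ((-(2*(n:ℝ)) : ℝ):ℂ) * ((phi s τ : ℝ) : ℂ)))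
        (fun τ _ => by
          dsimp only
          rw [add_comm]
          exact hpt n τ)]
    rw [intervalIntegral.integral_add (hc1.intervalIntegrable _ _) (hc2.intervalIntegrable _ _)]
    rw [intervalIntegral.integral_of_le Real.pi_pos.le,
      MeasureTheory.integral_Ioc_eq_integral_Ioo,
      intervalIntegral.integral_of_le Real.pi_pos.le,
      MeasureTheory.integral_Ioc_eq_integral_Ioo]
  have h1 := RL0 hs0 hs1 (gp s k ξ) (gp_cont hs0 hs1 k ξ) 1 (gp_norm s k ξ)
    (fun n => (2*(n:ℝ))) hm_pos
  have h2 := RL0 hs0 hs1 (gm s k ξ) (gm_cont hs0 hs1 k ξ) 1 (gm_norm s k ξ)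
    (fun n => (-(2*(n:ℝ)))) hm_neg
  have h3 := h1.add h2
  rw [add_zero] at h3
  apply h3.congr
  intro n
  exact (hsplit n).symm

end

section
variable {s : ℝ} (hs0 : 0 < s) (hs1 : s < 1)
include hs0 hs1

lemma Fqcont (k : ℤ) (ξ : ℝ) (n : ℕ) : Continuous (fun θ : ℝ => Complex.exp (Complex.I*k*θ) *
    ((Real.cos ((n:ℝ) * phi s (θ + ξ/n) + (n:ℝ) * phi s θ) : ℝ) : ℂ)) := by
  have hφ : Continuous (phi s) := continuous_phi
  exact (cont_exp_Ik hs0 hs1 k).mul (Complex.continuous_ofReal.comp (Real.continuous_cos.comp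
    ((continuous_const.mul (hφ.comp (continuous_id.add continuous_const))).add
      (continuous_const.mul hφ))))

lemma hQ (k : ℤ) (ξ : ℝ) : Tendsto (fun n : ℕ => ∫ θ in (0:ℝ)..(2*Real.pi),
    Complex.exp (Complex.I*k*θ) *
      ((Real.cos ((n:ℝ) * phi s (θ + ξ/n) + (n:ℝ) * phi s θ) : ℝ) : ℂ)) atTop (𝓝 0) := by
  have hdiff : Tendsto (fun n : ℕ => ∫ θ in (0:ℝ)..(2*Real.pi),
      (Complex.exp (Complex.I*k*θ) *
        ((Real.cos ((n:ℝ) * phi s (θ + ξ/n) + (n:ℝ) * phi s θ) : ℝ) : ℂ)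
       - Complex.exp (Complex.I*k*θ) *
        ((Real.cos (2*(n:ℝ) * phi s θ + ξ * hh s θ) : ℝ) : ℂ))) atTop (𝓝 0) := by
    have h0 : (0:ℂ) = ∫ θ in (0:ℝ)..(2*Real.pi), (0:ℂ) := by simp
    rw [h0]
    apply intervalIntegral.tendsto_integral_filter_of_dominated_convergence (fun _ => (2:ℝ))
    · exact Eventually.of_forall fun n =>
        ((Fqcont hs0 hs1 k ξ n).sub (Gcont hs0 hs1 k ξ n)).aestronglyMeasurable
    · refine Eventually.of_forall fun n => Eventually.of_forall fun θ _ => ?_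
      have hb1 : ‖Complex.exp (Complex.I*k*θ) *
          ((Real.cos ((n:ℝ) * phi s (θ + ξ/n) + (n:ℝ) * phi s θ) : ℝ) : ℂ)‖ ≤ 1 := by
        rw [norm_mul, norm_exp_Ik, one_mul, Complex.norm_real, Real.norm_eq_abs]
        exact Real.abs_cos_le_one _
      have hb2 : ‖Complex.exp (Complex.I*k*θ) *
          ((Real.cos (2*(n:ℝ) * phi s θ + ξ * hh s θ) : ℝ) : ℂ)‖ ≤ 1 := by
        rw [norm_mul, norm_exp_Ik, one_mul, Complex.norm_real, Real.norm_eq_abs]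
        exact Real.abs_cos_le_one _
      calc ‖_ - _‖ ≤ _ + _ := norm_sub_le _ _
        _ ≤ (2:ℝ) := by linarith
    · exact intervalIntegrable_const
    · refine Eventually.of_forall fun θ _ => ?_
      have h1 := tendsto_nDelta hs0 hs1 ξ θ (phi s) (hh s θ) (hasDerivAt_phi hs0 hs1 θ)
      have h2 : Tendsto (fun n : ℕ =>
          |(n:ℝ)*(phi s (θ+ξ/n) - phi s θ) - ξ*hh s θ|) atTop (𝓝 0) := by
        have h3 := h1.sub (tendsto_const_nhds (x := ξ * hh s θ))
        rw [sub_self] at h3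
        simpa using h3.abs
      apply squeeze_zero_norm _ h2
      intro n
      calc ‖Complex.exp (Complex.I*k*θ) *
            ((Real.cos ((n:ℝ) * phi s (θ + ξ/n) + (n:ℝ) * phi s θ) : ℝ) : ℂ)
          - Complex.exp (Complex.I*k*θ) *
            ((Real.cos (2*(n:ℝ) * phi s θ + ξ * hh s θ) : ℝ) : ℂ)‖
          = ‖Complex.exp (Complex.I*k*θ) *
            (((Real.cos ((n:ℝ) * phi s (θ + ξ/n) + (n:ℝ) * phi s θ)
              - Real.cos (2*(n:ℝ) * phi s θ + ξ * hh s θ) : ℝ)) : ℂ)‖ := by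
            rw [← mul_sub, Complex.ofReal_sub]
        _ = |Real.cos ((n:ℝ) * phi s (θ + ξ/n) + (n:ℝ) * phi s θ)
              - Real.cos (2*(n:ℝ) * phi s θ + ξ * hh s θ)| := by
            rw [norm_mul, norm_exp_Ik, one_mul, Complex.norm_real, Real.norm_eq_abs]
        _ ≤ |((n:ℝ) * phi s (θ + ξ/n) + (n:ℝ) * phi s θ)
              - (2*(n:ℝ) * phi s θ + ξ * hh s θ)| := _root_.abs_cos_sub_cos_le _ _
        _ = |(n:ℝ)*(phi s (θ+ξ/n) - phi s θ) - ξ*hh s θ| := by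
            congr 1
            ring
  have hfinal := hdiff.add (hQ' hs0 hs1 k ξ)
  rw [add_zero] at hfinal
  apply hfinal.congr
  intro n
  have hI := intervalIntegral.integral_add (μ := volume)
      (((Fqcont hs0 hs1 k ξ n).sub (Gcont hs0 hs1 k ξ n)).intervalIntegrable (0:ℝ) (2*Real.pi))
      ((Gcont hs0 hs1 k ξ n).intervalIntegrable (0:ℝ) (2*Real.pi))
  simp only [Pi.sub_apply] at hI
  rw [← hI]
  congr 1
  funext θ
  ring

end

section
variable {s : ℝ} (hs0 : 0 < s) (hs1 : s < 1)
include hs0 hs1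

lemma cont_coshh (k : ℤ) (ξ : ℝ) : Continuous (fun θ : ℝ =>
    Complex.exp (Complex.I*k*θ) * ((Real.cos (ξ * hh s θ) : ℝ) : ℂ)) :=
  (cont_exp_Ik hs0 hs1 k).mul (Complex.continuous_ofReal.comp
    (Real.continuous_cos.comp (continuous_const.mul (continuous_hh hs0 hs1))))

lemma Ipi_eq (k : ℤ) (ξ : ℝ) :
    (∫ θ in (0:ℝ)..Real.pi, Complex.exp (Complex.I*k*θ) * ((Real.cos (ξ * hh s θ) : ℝ) : ℂ))
    = ∫ x in (-s)..s, ek s k x *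
        Complex.ofReal (Real.cos (ξ * Real.sqrt (s ^ 2 - x ^ 2) / Real.sqrt (1 - x ^ 2))) *
        Complex.ofReal ((Real.sqrt (s ^ 2 - x ^ 2))⁻¹) := by
  have hanti : StrictAntiOn (fun θ : ℝ => s * Real.cos θ) (Icc 0 Real.pi) := by
    intro x hx y hy hxy
    have h := Real.strictAntiOn_cos hx hy hxy
    dsimp only
    nlinarith
  have himg2 : (fun θ : ℝ => s * Real.cos θ) '' Ioo 0 Real.pi = Ioo (-s) s := by
    apply Subset.antisymm
    · rintro - ⟨θ, hθ, rfl⟩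
      have hc1 : Real.cos θ < Real.cos 0 :=
        Real.strictAntiOn_cos ⟨le_refl 0, Real.pi_pos.le⟩ ⟨hθ.1.le, hθ.2.le⟩ hθ.1
      have hc2 : Real.cos Real.pi < Real.cos θ :=
        Real.strictAntiOn_cos ⟨hθ.1.le, hθ.2.le⟩ ⟨Real.pi_pos.le, le_refl _⟩ hθ.2
      rw [Real.cos_zero] at hc1; rw [Real.cos_pi] at hc2
      constructor <;> dsimp only <;> nlinarith
    · rintro x hx
      have hd1 : (-1:ℝ) < x / s := by rw [lt_div_iff₀ hs0]; nlinarith [hx.1]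
      have hd2 : x / s < 1 := by rw [div_lt_one hs0]; exact hx.2
      refine ⟨Real.arccos (x / s), ⟨Real.arccos_pos.2 hd2,
        lt_of_le_of_ne (Real.arccos_le_pi _) (by simp [Real.arccos_eq_pi]; linarith)⟩, ?_⟩
      dsimp only
      rw [Real.cos_arccos (by linarith) hd2.le, mul_div_cancel₀ _ hs0.ne']
  have hM : (∫ x in (-s)..s, ek s k x *
        Complex.ofReal (Real.cos (ξ * Real.sqrt (s ^ 2 - x ^ 2) / Real.sqrt (1 - x ^ 2))) *
        Complex.ofReal ((Real.sqrt (s ^ 2 - x ^ 2))⁻¹))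
      = ∫ x in Ioo (-s) s, ek s k x *
        Complex.ofReal (Real.cos (ξ * Real.sqrt (s ^ 2 - x ^ 2) / Real.sqrt (1 - x ^ 2))) *
        Complex.ofReal ((Real.sqrt (s ^ 2 - x ^ 2))⁻¹) := by
    rw [intervalIntegral.integral_of_le (by linarith), MeasureTheory.integral_Ioc_eq_integral_Ioo]
  rw [hM, ← himg2]
  rw [integral_image_eq_integral_abs_deriv_smul measurableSet_Ioo
      (fun x hx => ((Real.hasDerivAt_cos x).const_mul s).hasDerivWithinAt)
      (hanti.injOn.mono Ioo_subset_Icc_self)]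
  rw [intervalIntegral.integral_of_le Real.pi_pos.le, MeasureTheory.integral_Ioc_eq_integral_Ioo]
  apply setIntegral_congr_fun measurableSet_Ioo
  intro θ hθ
  dsimp only
  symm
  have hsin : 0 < Real.sin θ := Real.sin_pos_of_pos_of_lt_pi hθ.1 hθ.2
  have hss : 0 < s * Real.sin θ := by positivity
  have habs : |s * -Real.sin θ| = s * Real.sin θ := by
    rw [abs_of_nonpos (by nlinarith)]; ring
  have hsq : s^2 - (s * Real.cos θ)^2 = (s * Real.sin θ)^2 := by
    linear_combination (-(s^2)) * (Real.sin_sq_add_cos_sq θ)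
  have hsqrt : Real.sqrt (s^2 - (s * Real.cos θ)^2) = s * Real.sin θ := by
    rw [hsq, Real.sqrt_sq hss.le]
  have hek : ek s k (s * Real.cos θ) = Complex.exp (Complex.I*k*θ) := by
    rw [ek, mul_div_cancel_left₀ _ hs0.ne', Real.arccos_cos hθ.1.le hθ.2.le]
  have hcarg : ξ * Real.sqrt (s^2 - (s * Real.cos θ)^2) / Real.sqrt (1 - (s * Real.cos θ)^2)
      = ξ * hh s θ := by
    rw [hsqrt, hh, mul_div_assoc]
  rw [habs, hek, Complex.real_smul]
  calc ((s * Real.sin θ : ℝ):ℂ) * (Complex.exp (Complex.I*k*θ) *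
        Complex.ofReal (Real.cos (ξ * Real.sqrt (s^2 - (s * Real.cos θ)^2) /
          Real.sqrt (1 - (s * Real.cos θ)^2))) *
        Complex.ofReal ((Real.sqrt (s^2 - (s * Real.cos θ)^2))⁻¹))
      = (((s * Real.sin θ) * (Real.sqrt (s^2 - (s * Real.cos θ)^2))⁻¹ : ℝ):ℂ) *
        (Complex.exp (Complex.I*k*θ) *
          Complex.ofReal (Real.cos (ξ * Real.sqrt (s^2 - (s * Real.cos θ)^2) /
            Real.sqrt (1 - (s * Real.cos θ)^2)))) := by
        push_cast; ring
    _ = Complex.exp (Complex.I*k*θ) * Complex.ofReal (Real.cos (ξ * hh s θ)) := by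
        rw [hcarg, hsqrt, mul_inv_cancel₀ hss.ne', Complex.ofReal_one, one_mul]

lemma L1_eq (k : ℤ) (ξ : ℝ) :
    (∫ θ in (0:ℝ)..(2*Real.pi), Complex.exp (Complex.I*k*θ) * ((Real.cos (ξ * hh s θ) : ℝ) : ℂ))
    = (1 + ((-1:ℝ)^k : ℝ) : ℂ) *
      ∫ θ in (0:ℝ)..Real.pi, Complex.exp (Complex.I*k*θ) * ((Real.cos (ξ * hh s θ) : ℝ) : ℂ) := by
  have hc := cont_coshh hs0 hs1 k ξ
  rw [← intervalIntegral.integral_add_adjacent_intervals (a := (0:ℝ)) (b := Real.pi)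
      (c := 2*Real.pi) (hc.intervalIntegrable _ _) (hc.intervalIntegrable _ _)]
  rw [reflect_int]
  have hrefl : ∀ τ : ℝ, Complex.exp (Complex.I*k*((2*Real.pi - τ : ℝ):ℂ)) *
      ((Real.cos (ξ * hh s (2*Real.pi - τ)) : ℝ) : ℂ)
      = Complex.exp (-(Complex.I*k*τ)) * ((Real.cos (ξ * hh s τ) : ℝ) : ℂ) := by
    intro τ
    rw [exp_reflect, hh_reflect, show ξ * - hh s τ = -(ξ * hh s τ) by ring, Real.cos_neg]
  have hreflInt : (∫ θ in (0:ℝ)..Real.pi, Complex.exp (Complex.I*k*((2*Real.pi - θ : ℝ):ℂ)) *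
      ((Real.cos (ξ * hh s (2*Real.pi - θ)) : ℝ) : ℂ))
      = ∫ τ in (0:ℝ)..Real.pi, Complex.exp (-(Complex.I*k*τ)) * ((Real.cos (ξ * hh s τ) : ℝ) : ℂ) :=
    intervalIntegral.integral_congr (fun τ _ => hrefl τ)
  rw [hreflInt]
  have hc2 : Continuous (fun τ : ℝ =>
      Complex.exp (-(Complex.I*k*τ)) * ((Real.cos (ξ * hh s τ) : ℝ) : ℂ)) := by
    exact (Complex.continuous_exp.comp ((continuous_const.mul Complex.continuous_ofReal).neg)).mul
      (Complex.continuous_ofReal.comp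
        (Real.continuous_cos.comp (continuous_const.mul (continuous_hh hs0 hs1))))
  have hstep : (∫ τ in (0:ℝ)..Real.pi,
      Complex.exp (-(Complex.I*k*τ)) * ((Real.cos (ξ * hh s τ) : ℝ) : ℂ))
      = ((-1:ℝ)^k : ℂ) *
        ∫ θ in (0:ℝ)..Real.pi, Complex.exp (Complex.I*k*θ) * ((Real.cos (ξ * hh s θ) : ℝ) : ℂ) := by
    have h := intervalIntegral.integral_comp_sub_left (a := (0:ℝ)) (b := Real.pi)
      (fun τ => Complex.exp (-(Complex.I*k*τ)) * ((Real.cos (ξ * hh s τ) : ℝ) : ℂ)) Real.pi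
    rw [sub_self, sub_zero] at h
    rw [← h]
    rw [intervalIntegral.integral_congr (g := fun σ => ((-1:ℝ)^k : ℂ) *
        (Complex.exp (Complex.I*k*σ) * ((Real.cos (ξ * hh s σ) : ℝ) : ℂ)))
        (fun σ _ => by
          dsimp only
          rw [hh_pi_sub]
          rw [show -(Complex.I*(k:ℂ)*((Real.pi - σ : ℝ):ℂ))
              = -(Complex.I*k*Real.pi) + Complex.I*k*σ by push_cast; ring]
          rw [Complex.exp_add, exp_neg_pi_k]
          push_cast
          ring)]
    rw [intervalIntegral.integral_const_mul]
  rw [hstep]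
  push_cast
  ring
end

/-- The limit of `A_{n,k}(ξ)` as `n → ∞`. -/
theorem Ank_limit (s : ℝ) (hs0 : 0 < s) (hs1 : s < 1) (k : ℤ) (ξ : ℝ) :
    Filter.Tendsto (fun n : ℕ => Ank s k ξ n) Filter.atTop
      (nhds ((((1 + (-1 : ℝ) ^ k) / (4 * Real.pi) : ℝ) : ℂ) *
        ∫ x in (-s)..s,
          ek s k x *
            Complex.ofReal (Real.cos (ξ * Real.sqrt (s ^ 2 - x ^ 2) / Real.sqrt (1 - x ^ 2))) *
            Complex.ofReal ((Real.sqrt (s ^ 2 - x ^ 2))⁻¹))) := by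
  have hPl := hP hs0 hs1 k ξ
  have hQl := hQ hs0 hs1 k ξ
  have hsum := hPl.add hQl
  rw [add_zero] at hsum
  have h2 := (hsum.div_const 2).const_mul (((1 / (2 * Real.pi) : ℝ) : ℂ))
  have h3 := h2.congr (fun n => (Ank_eq hs0 hs1 k ξ n).symm)
  convert h3 using 2
  rw [L1_eq hs0 hs1 k ξ, Ipi_eq hs0 hs1 k ξ]
  have hpi : (Real.pi : ℂ) ≠ 0 := by
    exact_mod_cast Real.pi_ne_zero
  have hscal : (((1 + (-1:ℝ)^k)/(4*Real.pi) : ℝ) : ℂ)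
      = ((1/(2*Real.pi):ℝ):ℂ) * ((1 + ((-1:ℝ)^k : ℝ) : ℂ)/2) := by
    push_cast
    field_simp
    ring
  rw [hscal]
  ring
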